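/- Suppose G and G′ are both normal complements of a subgroup U in a group Γ, with G and G′ finite of the same order. Define φ : G → G′ by φ(g) = g·γ where γ is the unique element of U with g·γ ∈ G′. Then φ is a bijection satisfying φ(g₁g₂) = (g₁ φ(g₂) g₁⁻¹)·φ(g₁) for all g₁, g₂ ∈ G, and φ restricts to the identity on G ∩ G′. -/

import Mathlib

/-- If `G` and `G′` are normal complements of a subgroup `U` in `Γ`, with `G`, `G′`
finite of the same order, then the map `φ : G → G′`, `φ(g) = g·γ` where `γ ∈ U` is
the unique element with `g·γ ∈ G′`, is a bijection satisfying the cocycle rule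
`φ(g₁g₂) = (g₁ φ(g₂) g₁⁻¹) · φ(g₁)` and restricting to the identity on `G ∩ G′`. -/
theorem bijection_between_two_normal_complements {Γ : Type*} [Group Γ]
    (U G G' : Subgroup Γ) [G.Normal] [G'.Normal] [Finite G] [Finite G']
    (hcard : Nat.card G = Nat.card G')
    (h1 : Subgroup.IsComplement' G U) (h2 : Subgroup.IsComplement' G' U) :
    ∃ φ : G → G',
      (∀ g : G, ∃ γ ∈ U, (φ g : Γ) = (g : Γ) * γ) ∧
      Function.Bijective φ ∧
      (∀ g₁ g₂ : G,
        (φ (g₁ * g₂) : Γ) = (g₁ : Γ) * (φ g₂ : Γ) * (g₁ : Γ)⁻¹ * (φ g₁ : Γ)) ∧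
      (∀ g : G, (g : Γ) ∈ G' → (φ g : Γ) = (g : Γ)) := by
  classical
  -- uniqueness of decomposition
  have huniq : ∀ (a b : Γ), a ∈ G' → b ∈ U →
      ((h2.equiv (a * b)).1 : Γ) = a := by
    intro a b ha hb
    have : h2.equiv (a * b) = (⟨a, ha⟩, ⟨b, hb⟩) := by
      rw [Equiv.apply_eq_iff_eq_symm_apply]
      rfl
    rw [this]
  set φ : G → G' := fun g => ⟨((h2.equiv (g : Γ)).1 : Γ), (h2.equiv (g : Γ)).1.2⟩
    with hφ
  have hdef : ∀ g : G, (φ g : Γ) = (g : Γ) * (((h2.equiv (g : Γ)).2 : Γ))⁻¹ := by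
    intro g
    exact h2.equiv_fst_eq_mul_inv (g : Γ)
  refine ⟨φ, ?_, ?_, ?_, ?_⟩
  · intro g
    exact ⟨(((h2.equiv (g : Γ)).2 : Γ))⁻¹, inv_mem (h2.equiv (g : Γ)).2.2, hdef g⟩
  · -- bijective
    rw [Nat.bijective_iff_injective_and_card]
    refine ⟨?_, hcard⟩
    intro g g' h
    have hU1 : ((h2.equiv (g : Γ)).2 : Γ) ∈ U := (h2.equiv (g : Γ)).2.2
    have hU2 : ((h2.equiv (g' : Γ)).2 : Γ) ∈ U := (h2.equiv (g' : Γ)).2.2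
    have h' : (g : Γ) * (((h2.equiv (g : Γ)).2 : Γ))⁻¹
        = (g' : Γ) * (((h2.equiv (g' : Γ)).2 : Γ))⁻¹ := by
      rw [← hdef, ← hdef, h]
    have hmem : (g' : Γ)⁻¹ * (g : Γ) ∈ U := by
      have hc := congrArg (fun x => (g' : Γ)⁻¹ * x * ((h2.equiv (g : Γ)).2 : Γ)) h'
      simp only [mul_assoc, inv_mul_cancel, mul_one, inv_mul_cancel_left] at hc
      rw [hc]
      exact mul_mem (inv_mem hU2) hU1
    have hmemG : (g' : Γ)⁻¹ * (g : Γ) ∈ G := mul_mem (inv_mem g'.2) g.2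
    have : (g' : Γ)⁻¹ * (g : Γ) ∈ G ⊓ U := ⟨hmemG, hmem⟩
    rw [h1.disjoint.eq_bot] at this
    have : (g' : Γ)⁻¹ * (g : Γ) = 1 := this
    have : (g : Γ) = (g' : Γ) := by
      rw [← mul_one (g' : Γ), ← this]; group
    exact Subtype.ext this
  · -- cocycle
    intro g₁ g₂
    have hu2 : ((h2.equiv ((g₂ : Γ))).2 : Γ) ∈ U := (h2.equiv ((g₂ : Γ))).2.2
    have hu1 : ((h2.equiv ((g₁ : Γ))).2 : Γ) ∈ U := (h2.equiv ((g₁ : Γ))).2.2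
    set u₁ := ((h2.equiv ((g₁ : Γ))).2 : Γ)
    set u₂ := ((h2.equiv ((g₂ : Γ))).2 : Γ)
    have e1 : (g₁ : Γ) = (φ g₁ : Γ) * u₁ := by
      rw [hdef]; exact (inv_mul_cancel_right _ _).symm
    have e2 : (g₂ : Γ) = (φ g₂ : Γ) * u₂ := by
      rw [hdef]; exact (inv_mul_cancel_right _ _).symm
    have key : ((g₁ * g₂ : G) : Γ)
        = ((g₁ : Γ) * (φ g₂ : Γ) * (g₁ : Γ)⁻¹ * (φ g₁ : Γ)) * (u₁ * u₂) := by
      push_cast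
      have e1' : (φ g₁ : Γ) * u₁ = (g₁ : Γ) := e1.symm
      have e2' : (φ g₂ : Γ) * u₂ = (g₂ : Γ) := e2.symm
      symm
      calc ((g₁ : Γ) * (φ g₂ : Γ) * (g₁ : Γ)⁻¹ * (φ g₁ : Γ)) * (u₁ * u₂)
          = (g₁ : Γ) * (φ g₂ : Γ) * (g₁ : Γ)⁻¹ * ((φ g₁ : Γ) * u₁) * u₂ := by group
        _ = (g₁ : Γ) * ((φ g₂ : Γ) * u₂) := by rw [e1']; group
        _ = (g₁ : Γ) * (g₂ : Γ) := by rw [e2']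
    have hmemG' : (g₁ : Γ) * (φ g₂ : Γ) * (g₁ : Γ)⁻¹ * (φ g₁ : Γ) ∈ G' := by
      refine mul_mem ?_ (φ g₁).2
      have := ‹G'.Normal›.conj_mem _ (φ g₂).2 (g₁ : Γ)
      simpa [mul_assoc] using this
    have := huniq _ _ hmemG' (mul_mem hu1 hu2)
    rw [← key] at this
    exact this
  · -- identity on intersection
    intro g hg
    have : ((g : Γ)) = (g : Γ) * (1 : Γ) := by group
    calc (φ g : Γ) = ((h2.equiv ((g : Γ) * 1)).1 : Γ) := by rw [← this]
    _ = (g : Γ) := huniq _ _ hg (one_mem U)
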